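/- For any z ∈ H and λ̄ > 0, with e(z, λ) = z − P_C(z − λF(z)), the residuals at stepsize λ̄ and 1 satisfy min{1, λ̄}‖e(z, 1)‖ ≤ ‖e(z, λ̄)‖ ≤ max{1, λ̄}‖e(z, 1)‖. -/
import Mathlib


open scoped RealInnerProductSpace

lemma proj_inner_le {H : Type*} [NormedAddCommGroup H] [InnerProductSpace ℝ H]
    {K : Set H} (h : Convex ℝ K) {x p : H} (hp : p ∈ K)
    (hmin : ∀ u ∈ K, ‖x - p‖ ≤ ‖x - u‖) : ∀ w ∈ K, ⟪x - p, w - p⟫ ≤ 0 := by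
  rw [← norm_eq_iInf_iff_real_inner_le_zero h hp]
  haveI : Nonempty K := ⟨⟨p, hp⟩⟩
  refine le_antisymm (le_ciInf fun w => hmin w w.2) ?_
  have hbd : BddBelow (Set.range fun w : K => ‖x - (w : H)‖) := by
    refine ⟨0, ?_⟩
    rintro r ⟨w, rfl⟩
    exact norm_nonneg _
  exact ciInf_le hbd ⟨p, hp⟩

/-- For any `z ∈ H` and `λ̄ > 0`, with `e(z, λ) = z - P_C (z - λ F z)`, the residuals at
stepsizes `λ̄` and `1` satisfy
`min {1, λ̄} ‖e(z, 1)‖ ≤ ‖e(z, λ̄)‖ ≤ max {1, λ̄} ‖e(z, 1)‖`. -/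
theorem stmt_18 {H : Type*} [NormedAddCommGroup H] [InnerProductSpace ℝ H] [CompleteSpace H]
    (C : Set H) (hCne : C.Nonempty) (hCc : IsClosed C) (hC : Convex ℝ C)
    (F : H → H) (z : H) (lam : ℝ) (hlam : 0 < lam)
    (p1 plam : H)
    (hp1 : p1 ∈ C) (hp1proj : ∀ u ∈ C, ‖z - (1 : ℝ) • F z - p1‖ ≤ ‖z - (1 : ℝ) • F z - u‖)
    (hplam : plam ∈ C) (hplamproj : ∀ u ∈ C, ‖z - lam • F z - plam‖ ≤ ‖z - lam • F z - u‖) :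
    min 1 lam * ‖z - p1‖ ≤ ‖z - plam‖ ∧ ‖z - plam‖ ≤ max 1 lam * ‖z - p1‖ := by
  have h1 : ⟪z - (1 : ℝ) • F z - p1, plam - p1⟫ ≤ 0 :=
    proj_inner_le hC hp1 hp1proj plam hplam
  have h2 : ⟪z - lam • F z - plam, p1 - plam⟫ ≤ 0 :=
    proj_inner_le hC hplam hplamproj p1 hp1
  set a := ‖z - p1‖ with ha
  set b := ‖z - plam‖ with hb
  have ha0 : 0 ≤ a := norm_nonneg _
  have hb0 : 0 ≤ b := norm_nonneg _
  -- expand the two variational inequalities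
  have e1 : ⟪z - p1, plam - p1⟫ - ⟪F z, plam - p1⟫ ≤ 0 := by
    have : z - (1 : ℝ) • F z - p1 = (z - p1) - F z := by
      simp only [one_smul]; abel
    rw [this, inner_sub_left] at h1
    linarith
  have e2 : ⟪z - plam, p1 - plam⟫ - lam * ⟪F z, p1 - plam⟫ ≤ 0 := by
    have : z - lam • F z - plam = (z - plam) - lam • F z := by abel
    rw [this, inner_sub_left, real_inner_smul_left] at h2
    linarith
  have hFcancel : ⟪F z, p1 - plam⟫ = - ⟪F z, plam - p1⟫ := by
    rw [← inner_neg_right]; congr 1; abel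
  -- combine: lam * e1 + e2 (the F-terms cancel)
  have hcomb : lam * ⟪z - p1, plam - p1⟫ + ⟪z - plam, p1 - plam⟫ ≤ 0 := by
    have := mul_le_mul_of_nonneg_left e1 hlam.le
    rw [mul_sub] at this
    rw [hFcancel] at e2
    linarith
  -- rewrite in terms of the residuals
  have hrw1 : ⟪z - p1, plam - p1⟫ = a ^ 2 - ⟪z - plam, z - p1⟫ := by
    have : plam - p1 = (z - p1) - (z - plam) := by abel
    rw [this, inner_sub_right, real_inner_self_eq_norm_sq, real_inner_comm]
  have hrw2 : ⟪z - plam, p1 - plam⟫ = b ^ 2 - ⟪z - plam, z - p1⟫ := by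
    have : p1 - plam = (z - plam) - (z - p1) := by abel
    rw [this, inner_sub_right, real_inner_self_eq_norm_sq]
  have hcs : ⟪z - plam, z - p1⟫ ≤ b * a := real_inner_le_norm _ _
  have key : lam * a ^ 2 + b ^ 2 ≤ (lam + 1) * (b * a) := by
    rw [hrw1, hrw2] at hcomb
    nlinarith
  have hprod : (a - b) * (lam * a - b) ≤ 0 := by nlinarith
  rcases le_or_gt lam 1 with hl | hl
  · rw [min_eq_right hl, max_eq_left hl, one_mul]
    have hla : lam * a ≤ a := by nlinarith
    constructor
    · by_contra hcon
      push_neg at hcon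
      have h2 : 0 < a - b := by linarith
      have := mul_pos h2 (by linarith : (0:ℝ) < lam * a - b)
      linarith
    · by_contra hcon
      push_neg at hcon
      have := mul_pos_of_neg_of_neg (by linarith : a - b < 0)
        (by linarith : lam * a - b < 0)
      linarith
  · rw [min_eq_left hl.le, max_eq_right hl.le, one_mul]
    have hla : a ≤ lam * a := by nlinarith
    constructor
    · by_contra hcon
      push_neg at hcon
      have := mul_pos (by linarith : (0:ℝ) < a - b)
        (by linarith : (0:ℝ) < lam * a - b)
      linarith
    · by_contra hcon
      push_neg at hcon
      have := mul_pos_of_neg_of_neg (by linarith : a - b < 0)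
        (by linarith : lam * a - b < 0)
      linarith
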